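/- Let D₂(x,t) = x⁶ + 3(t² + 1)x⁴ + 3(t² − 3)²x² + t⁶ + 27t⁴ + 99t² + 9 and D̂₂(x,t;α,β) = D₂(x,t) + 2αt(3x² − t² − 9) − 2βx(x² − 3t² − 3) + α² + β². Fix a real parameter α. Then at every point (ξ,η,τ) ∈ ℝ³ where D̂₂(ξ − 3τ, η; α, −48τ) > 0, the function v(ξ,η,τ) = 2·∂²/∂ξ² [ln D̂₂(ξ − 3τ, η; α, −48τ)] satisfies the Kadomtsev–Petviashvili I equation (v_τ + 6·v·v_ξ + v_ξξξ)_ξ = 3·v_ηη. -/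

import Mathlib

open Filter Topology



/-- Partial derivative in the first variable `ξ`. -/
noncomputable def dXi (f : ℝ → ℝ → ℝ → ℝ) : ℝ → ℝ → ℝ → ℝ :=
  fun ξ η τ => deriv (fun s => f s η τ) ξ

/-- Partial derivative in the second variable `η`. -/
noncomputable def dEta (f : ℝ → ℝ → ℝ → ℝ) : ℝ → ℝ → ℝ → ℝ :=
  fun ξ η τ => deriv (fun s => f ξ s τ) η

/-- Partial derivative in the third variable `τ`. -/
noncomputable def dTau (f : ℝ → ℝ → ℝ → ℝ) : ℝ → ℝ → ℝ → ℝ :=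
  fun ξ η τ => deriv (fun s => f ξ η s) τ

/-- The KPI equation `(v_τ + 6 v v_ξ + v_ξξξ)_ξ = 3 v_ηη` at the point `(ξ,η,τ)`. -/
def KPIAt (v : ℝ → ℝ → ℝ → ℝ) (ξ η τ : ℝ) : Prop :=
  dXi (fun ξ' η' τ' => dTau v ξ' η' τ' + 6 * v ξ' η' τ' * dXi v ξ' η' τ'
      + dXi (dXi (dXi v)) ξ' η' τ') ξ η τ
    = 3 * dEta (dEta v) ξ η τ

/-- The KPI equation `(v_τ + 6 v v_ξ + v_ξξξ)_ξ = 3 v_ηη` on all of ℝ³. -/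
def IsKPISolution (v : ℝ → ℝ → ℝ → ℝ) : Prop := ∀ ξ η τ : ℝ, KPIAt v ξ η τ

/-- `D₂(x,t) = x⁶ + 3(t²+1)x⁴ + 3(t²−3)²x² + t⁶ + 27t⁴ + 99t² + 9`. -/
noncomputable def D2 (x t : ℝ) : ℝ :=
  x ^ 6 + 3 * (t ^ 2 + 1) * x ^ 4 + 3 * (t ^ 2 - 3) ^ 2 * x ^ 2
    + t ^ 6 + 27 * t ^ 4 + 99 * t ^ 2 + 9

/-- `D̂₂(x,t;α,β) = D₂(x,t) + 2αt(3x² − t² − 9) − 2βx(x² − 3t² − 3) + α² + β²`. -/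
noncomputable def D2hat (x t α β : ℝ) : ℝ :=
  D2 x t + 2 * α * t * (3 * x ^ 2 - t ^ 2 - 9) - 2 * β * x * (x ^ 2 - 3 * t ^ 2 - 3)
    + α ^ 2 + β ^ 2

namespace DMKP

noncomputable def PP (a x y t : ℝ) : ℝ := 9 + 3411 * t ^ 2 + (-2349) * t ^ 4 + 729 * t ^ 6 + 99 * y ^ 2 + 702 * y ^ 2 * t ^ 2 + 243 * y ^ 2 * t ^ 4 + 27 * y ^ 4 + 27 * y ^ 4 * t ^ 2 + y ^ 6 + (-450) * x * t + 2268 * x * t ^ 3 + (-1458) * x * t ^ 5 + (-180) * x * y ^ 2 * t + (-324) * x * y ^ 2 * t ^ 3 + (-18) * x * y ^ 4 * t + 27 * x ^ 2 + (-702) * x ^ 2 * t ^ 2 + 1215 * x ^ 2 * t ^ 4 + (-18) * x ^ 2 * y ^ 2 + 162 * x ^ 2 * y ^ 2 * t ^ 2 + 3 * x ^ 2 * y ^ 4 + 60 * x ^ 3 * t + (-540) * x ^ 3 * t ^ 3 + (-36) * x ^ 3 * y ^ 2 * t + 3 * x ^ 4 + 135 * x ^ 4 * t ^ 2 + 3 *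 x ^ 4 * y ^ 2 + (-18) * x ^ 5 * t + x ^ 6 + (-18) * a * y + 54 * a * y * t ^ 2 + (-2) * a * y ^ 3 + (-36) * a * x * y * t + 6 * a * x ^ 2 * y + a ^ 2
noncomputable def PPx (a x y t : ℝ) : ℝ := (-450) * t + 2268 * t ^ 3 + (-1458) * t ^ 5 + (-180) * y ^ 2 * t + (-324) * y ^ 2 * t ^ 3 + (-18) * y ^ 4 * t + 54 * x + (-1404) * x * t ^ 2 + 2430 * x * t ^ 4 + (-36) * x * y ^ 2 + 324 * x * y ^ 2 * t ^ 2 + 6 * x * y ^ 4 + 180 * x ^ 2 * t + (-1620) * x ^ 2 * t ^ 3 + (-108) * x ^ 2 * y ^ 2 * t + 12 * x ^ 3 + 540 * x ^ 3 * t ^ 2 + 12 * x ^ 3 * y ^ 2 + (-90) * x ^ 4 * t + 6 * x ^ 5 + (-36) * a * y * t + 12 * a * x * y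
noncomputable def PPxx (a x y t : ℝ) : ℝ := 54 + (-1404) * t ^ 2 + 2430 * t ^ 4 + (-36) * y ^ 2 + 324 * y ^ 2 * t ^ 2 + 6 * y ^ 4 + 360 * x * t + (-3240) * x * t ^ 3 + (-216) * x * y ^ 2 * t + 36 * x ^ 2 + 1620 * x ^ 2 * t ^ 2 + 36 * x ^ 2 * y ^ 2 + (-360) * x ^ 3 * t + 30 * x ^ 4 + 12 * a * y
noncomputable def PPxxx (a x y t : ℝ) : ℝ := 360 * t + (-3240) * t ^ 3 + (-216) * y ^ 2 * t + 72 * x + 3240 * x * t ^ 2 + 72 * x * y ^ 2 + (-1080) * x ^ 2 * t + 120 * x ^ 3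
noncomputable def PPx4 (a x y t : ℝ) : ℝ := 72 + 3240 * t ^ 2 + 72 * y ^ 2 + (-2160) * x * t + 360 * x ^ 2
noncomputable def PPx5 (a x y t : ℝ) : ℝ := (-2160) * t + 720 * x
noncomputable def PPx6 (a x y t : ℝ) : ℝ := 720
noncomputable def PPt (a x y t : ℝ) : ℝ := 6822 * t + (-9396) * t ^ 3 + 4374 * t ^ 5 + 1404 * y ^ 2 * t + 972 * y ^ 2 * t ^ 3 + 54 * y ^ 4 * t + (-450) * x + 6804 * x * t ^ 2 + (-7290) * x * t ^ 4 + (-180) * x * y ^ 2 + (-972) * x * y ^ 2 * t ^ 2 + (-18) * x * y ^ 4 + (-1404) * x ^ 2 * t + 4860 * x ^ 2 * t ^ 3 + 324 * x ^ 2 * y ^ 2 * t + 60 * x ^ 3 + (-1620) * x ^ 3 * t ^ 2 + (-36) * x ^ 3 * y ^ 2 + 270 * x ^ 4 * t + (-18) * x ^ 5 + 108 * a * y * t + (-36) * a * x * y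
noncomputable def PPxt (a x y t : ℝ) : ℝ := (-450) + 6804 * t ^ 2 + (-7290) * t ^ 4 + (-180) * y ^ 2 + (-972) * y ^ 2 * t ^ 2 + (-18) * y ^ 4 + (-2808) * x * t + 9720 * x * t ^ 3 + 648 * x * y ^ 2 * t + 180 * x ^ 2 + (-4860) * x ^ 2 * t ^ 2 + (-108) * x ^ 2 * y ^ 2 + 1080 * x ^ 3 * t + (-90) * x ^ 4 + (-36) * a * y
noncomputable def PPxxt (a x y t : ℝ) : ℝ := (-2808) * t + 9720 * t ^ 3 + 648 * y ^ 2 * t + 360 * x + (-9720) * x * t ^ 2 + (-216) * x * y ^ 2 + 3240 * x ^ 2 * t + (-360) * x ^ 3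
noncomputable def PPxxxt (a x y t : ℝ) : ℝ := 360 + (-9720) * t ^ 2 + (-216) * y ^ 2 + 6480 * x * t + (-1080) * x ^ 2
noncomputable def PPy (a x y t : ℝ) : ℝ := 198 * y + 1404 * y * t ^ 2 + 486 * y * t ^ 4 + 108 * y ^ 3 + 108 * y ^ 3 * t ^ 2 + 6 * y ^ 5 + (-360) * x * y * t + (-648) * x * y * t ^ 3 + (-72) * x * y ^ 3 * t + (-36) * x ^ 2 * y + 324 * x ^ 2 * y * t ^ 2 + 12 * x ^ 2 * y ^ 3 + (-72) * x ^ 3 * y * t + 6 * x ^ 4 * y + (-18) * a + 54 * a * t ^ 2 + (-6) * a * y ^ 2 + (-36) * a * x * t + 6 * a * x ^ 2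
noncomputable def PPxy (a x y t : ℝ) : ℝ := (-360) * y * t + (-648) * y * t ^ 3 + (-72) * y ^ 3 * t + (-72) * x * y + 648 * x * y * t ^ 2 + 24 * x * y ^ 3 + (-216) * x ^ 2 * y * t + 24 * x ^ 3 * y + (-36) * a * t + 12 * a * x
noncomputable def PPxxy (a x y t : ℝ) : ℝ := (-72) * y + 648 * y * t ^ 2 + 24 * y ^ 3 + (-432) * x * y * t + 72 * x ^ 2 * y + 12 * a
noncomputable def PPyy (a x y t : ℝ) : ℝ := 198 + 1404 * t ^ 2 + 486 * t ^ 4 + 324 * y ^ 2 + 324 * y ^ 2 * t ^ 2 + 30 * y ^ 4 + (-360) * x * t + (-648) * x * t ^ 3 + (-216) * x * y ^ 2 * t + (-36) * x ^ 2 + 324 * x ^ 2 * t ^ 2 + 36 * x ^ 2 * y ^ 2 + (-72) * x ^ 3 * t + 6 * x ^ 4 + (-12) * a * y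
noncomputable def PPxyy (a x y t : ℝ) : ℝ := (-360) * t + (-648) * t ^ 3 + (-216) * y ^ 2 * t + (-72) * x + 648 * x * t ^ 2 + 72 * x * y ^ 2 + (-216) * x ^ 2 * t + 24 * x ^ 3
noncomputable def PPxxyy (a x y t : ℝ) : ℝ := (-72) + 648 * t ^ 2 + 72 * y ^ 2 + (-432) * x * t + 72 * x ^ 2

private theorem hasDerivAt_of_eq {f g : ℝ → ℝ} {u v : ℝ} {x : ℝ} (hf : HasDerivAt f u x)
    (hfg : ∀ s, g s = f s) (huv : v = u) : HasDerivAt g v x := by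
  subst huv; exact hf.congr_of_eventuallyEq (Filter.Eventually.of_forall hfg)

private theorem deriv_eq_of_eventually {f g : ℝ → ℝ} {x d : ℝ}
    (hfg : ∀ᶠ s in 𝓝 x, f s = g s) (hg : HasDerivAt g d x) : deriv f x = d := by
  rw [Filter.EventuallyEq.deriv_eq hfg]; exact hg.deriv

theorem hPP_x (a x y t : ℝ) : HasDerivAt (fun s => PP a s y t) (PPx a x y t) x := by
  have hcomb := (((((((hasDerivAt_const x ((9 + 3411 * t ^ 2 + (-2349) * t ^ 4 + 729 * t ^ 6 + 99 * y ^ 2 + 702 * y ^ 2 * t ^ 2 + 243 * y ^ 2 * t ^ 4 + 27 * y ^ 4 + 27 * y ^ 4 * t ^ 2 + y ^ 6 + (-18) * a * y + 54 * a * y * t ^ 2 + (-2) * a * y ^ 3 + a ^ 2 : ℝ))).add (HasDerivAt.const_mul (((-450) * t + 2268 * t ^ 3 + (-1458) * t ^ 5 + (-180) * y ^ 2 * t + (-324) * y ^ 2 * t ^ 3 + (-18) * y ^ 4 * t + (-36) * a * y * t) : ℝ) (hasDerivAt_pow 1 x))).add (HasDerivAt.const_mul ((27 + (-702) * t ^ 2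 + 1215 * t ^ 4 + (-18) * y ^ 2 + 162 * y ^ 2 * t ^ 2 + 3 * y ^ 4 + 6 * a * y) : ℝ) (hasDerivAt_pow 2 x))).add (HasDerivAt.const_mul ((60 * t + (-540) * t ^ 3 + (-36) * y ^ 2 * t) : ℝ) (hasDerivAt_pow 3 x))).add (HasDerivAt.const_mul ((3 + 135 * t ^ 2 + 3 * y ^ 2) : ℝ) (hasDerivAt_pow 4 x))).add (HasDerivAt.const_mul (((-18) * t) : ℝ) (hasDerivAt_pow 5 x))).add (HasDerivAt.const_mul ((1) : ℝ) (hasDerivAt_pow 6 x)))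
  exact hasDerivAt_of_eq hcomb (fun s => by simp only [PP, Pi.add_apply]; ring)
    (by simp only [PPx]; norm_num; try ring)

theorem hPPx_x (a x y t : ℝ) : HasDerivAt (fun s => PPx a s y t) (PPxx a x y t) x := by
  have hcomb := ((((((hasDerivAt_const x (((-450) * t + 2268 * t ^ 3 + (-1458) * t ^ 5 + (-180) * y ^ 2 * t + (-324) * y ^ 2 * t ^ 3 + (-18) * y ^ 4 * t + (-36) * a * y * t : ℝ))).add (HasDerivAt.const_mul ((54 + (-1404) * t ^ 2 + 2430 * t ^ 4 + (-36) * y ^ 2 + 324 * y ^ 2 * t ^ 2 + 6 * y ^ 4 + 12 * a * y) : ℝ) (hasDerivAt_pow 1 x))).add (HasDerivAt.const_mul ((180 * t + (-1620) * t ^ 3 + (-108) * y ^ 2 * t) : ℝ) (hasDerivAt_pow 2 x))).add (HasDerivAt.const_mul ((12 + 540 * t ^ 2 + 12 * y ^ 2) : ℝ) (hasDerivAt_pow 3 x))).add (HasDerivAt.const_mul (((-90) * t) : ℝ) (hasDerivAt_pow 4 x))).add (HasDerivAt.const_mul ((6) : ℝ) (hasDerivAt_pow 5 x)))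
  exact hasDerivAt_of_eq hcomb (fun s => by simp only [PPx, Pi.add_apply]; ring)
    (by simp only [PPxx]; norm_num; try ring)

theorem hPPxx_x (a x y t : ℝ) : HasDerivAt (fun s => PPxx a s y t) (PPxxx a x y t) x := by
  have hcomb := (((((hasDerivAt_const x ((54 + (-1404) * t ^ 2 + 2430 * t ^ 4 + (-36) * y ^ 2 + 324 * y ^ 2 * t ^ 2 + 6 * y ^ 4 + 12 * a * y : ℝ))).add (HasDerivAt.const_mul ((360 * t + (-3240) * t ^ 3 + (-216) * y ^ 2 * t) : ℝ) (hasDerivAt_pow 1 x))).add (HasDerivAt.const_mul ((36 + 1620 * t ^ 2 + 36 * y ^ 2) : ℝ) (hasDerivAt_pow 2 x))).add (HasDerivAt.const_mul (((-360) * t) : ℝ) (hasDerivAt_pow 3 x))).add (HasDerivAt.const_mul ((30) : ℝ) (hasDerivAt_pow 4 x)))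
  exact hasDerivAt_of_eq hcomb (fun s => by simp only [PPxx, Pi.add_apply]; ring)
    (by simp only [PPxxx]; norm_num; try ring)

theorem hPPxxx_x (a x y t : ℝ) : HasDerivAt (fun s => PPxxx a s y t) (PPx4 a x y t) x := by
  have hcomb := ((((hasDerivAt_const x ((360 * t + (-3240) * t ^ 3 + (-216) * y ^ 2 * t : ℝ))).add (HasDerivAt.const_mul ((72 + 3240 * t ^ 2 + 72 * y ^ 2) : ℝ) (hasDerivAt_pow 1 x))).add (HasDerivAt.const_mul (((-1080) * t) : ℝ) (hasDerivAt_pow 2 x))).add (HasDerivAt.const_mul ((120) : ℝ) (hasDerivAt_pow 3 x)))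
  exact hasDerivAt_of_eq hcomb (fun s => by simp only [PPxxx, Pi.add_apply]; ring)
    (by simp only [PPx4]; norm_num; try ring)

theorem hPPx4_x (a x y t : ℝ) : HasDerivAt (fun s => PPx4 a s y t) (PPx5 a x y t) x := by
  have hcomb := (((hasDerivAt_const x ((72 + 3240 * t ^ 2 + 72 * y ^ 2 : ℝ))).add (HasDerivAt.const_mul (((-2160) * t) : ℝ) (hasDerivAt_pow 1 x))).add (HasDerivAt.const_mul ((360) : ℝ) (hasDerivAt_pow 2 x)))
  exact hasDerivAt_of_eq hcomb (fun s => by simp only [PPx4, Pi.add_apply]; ring)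
    (by simp only [PPx5]; norm_num; try ring)

theorem hPPx5_x (a x y t : ℝ) : HasDerivAt (fun s => PPx5 a s y t) (PPx6 a x y t) x := by
  have hcomb := ((hasDerivAt_const x (((-2160) * t : ℝ))).add (HasDerivAt.const_mul ((720) : ℝ) (hasDerivAt_pow 1 x)))
  exact hasDerivAt_of_eq hcomb (fun s => by simp only [PPx5, Pi.add_apply]; ring)
    (by simp only [PPx6]; norm_num; try ring)

theorem hPPt_x (a x y t : ℝ) : HasDerivAt (fun s => PPt a s y t) (PPxt a x y t) x := by
  have hcomb := ((((((hasDerivAt_const x ((6822 * t + (-9396) * t ^ 3 + 4374 * t ^ 5 + 1404 * y ^ 2 * t + 972 * y ^ 2 * t ^ 3 + 54 * y ^ 4 * t + 108 * a * y * t : ℝ))).add (HasDerivAt.const_mul (((-450) + 6804 * t ^ 2 + (-7290) * t ^ 4 + (-180) * y ^ 2 + (-972) * y ^ 2 * t ^ 2 + (-18) * y ^ 4 + (-36) * a * y) : ℝ) (hasDerivAt_pow 1 x))).add (HasDerivAt.const_mul (((-1404) * t + 4860 * t ^ 3 + 324 * y ^ 2 * t) : ℝ) (hasDerivAt_pow 2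 x))).add (HasDerivAt.const_mul ((60 + (-1620) * t ^ 2 + (-36) * y ^ 2) : ℝ) (hasDerivAt_pow 3 x))).add (HasDerivAt.const_mul ((270 * t) : ℝ) (hasDerivAt_pow 4 x))).add (HasDerivAt.const_mul (((-18)) : ℝ) (hasDerivAt_pow 5 x)))
  exact hasDerivAt_of_eq hcomb (fun s => by simp only [PPt, Pi.add_apply]; ring)
    (by simp only [PPxt]; norm_num; try ring)

theorem hPPxt_x (a x y t : ℝ) : HasDerivAt (fun s => PPxt a s y t) (PPxxt a x y t) x := by
  have hcomb := (((((hasDerivAt_const x (((-450) + 6804 * t ^ 2 + (-7290) * t ^ 4 + (-180) * y ^ 2 + (-972) * y ^ 2 * t ^ 2 + (-18) * y ^ 4 + (-36) * a * y : ℝ))).add (HasDerivAt.const_mul (((-2808) * t + 9720 * t ^ 3 + 648 * y ^ 2 * t) : ℝ) (hasDerivAt_pow 1 x))).add (HasDerivAt.const_mul ((180 + (-4860) * t ^ 2 + (-108) * y ^ 2) : ℝ) (hasDerivAt_pow 2 x))).add (HasDerivAt.const_mul ((1080 * t) : ℝ) (hasDerivAt_pow 3 x))).add (HasDerivAt.const_mul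 (((-90)) : ℝ) (hasDerivAt_pow 4 x)))
  exact hasDerivAt_of_eq hcomb (fun s => by simp only [PPxt, Pi.add_apply]; ring)
    (by simp only [PPxxt]; norm_num; try ring)

theorem hPPxxt_x (a x y t : ℝ) : HasDerivAt (fun s => PPxxt a s y t) (PPxxxt a x y t) x := by
  have hcomb := ((((hasDerivAt_const x (((-2808) * t + 9720 * t ^ 3 + 648 * y ^ 2 * t : ℝ))).add (HasDerivAt.const_mul ((360 + (-9720) * t ^ 2 + (-216) * y ^ 2) : ℝ) (hasDerivAt_pow 1 x))).add (HasDerivAt.const_mul ((3240 * t) : ℝ) (hasDerivAt_pow 2 x))).add (HasDerivAt.const_mul (((-360)) : ℝ) (hasDerivAt_pow 3 x)))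
  exact hasDerivAt_of_eq hcomb (fun s => by simp only [PPxxt, Pi.add_apply]; ring)
    (by simp only [PPxxxt]; norm_num; try ring)

theorem hPP_y (a x y t : ℝ) : HasDerivAt (fun s => PP a x s t) (PPy a x y t) y := by
  have hcomb := ((((((hasDerivAt_const y ((9 + 3411 * t ^ 2 + (-2349) * t ^ 4 + 729 * t ^ 6 + (-450) * x * t + 2268 * x * t ^ 3 + (-1458) * x * t ^ 5 + 27 * x ^ 2 + (-702) * x ^ 2 * t ^ 2 + 1215 * x ^ 2 * t ^ 4 + 60 * x ^ 3 * t + (-540) * x ^ 3 * t ^ 3 + 3 * x ^ 4 + 135 * x ^ 4 * t ^ 2 + (-18) * x ^ 5 * t + x ^ 6 + a ^ 2 : ℝ))).add (HasDerivAt.const_mul (((-18) * a + 54 * a * t ^ 2 + (-36) * a * x * t + 6 * a * x ^ 2) : ℝ) (hasDerivAt_pow 1 y))).add (HasDerivAt.const_mul ((99 + 702 * t ^ 2 + 243 * t ^ 4 + (-180) * x * t + (-324) * x * t ^ 3 + (-18) * x ^ 2 + 162 * x ^ 2 * t ^ 2 + (-36) * x ^ 3 * t + 3 * x ^ 4) :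 ℝ) (hasDerivAt_pow 2 y))).add (HasDerivAt.const_mul (((-2) * a) : ℝ) (hasDerivAt_pow 3 y))).add (HasDerivAt.const_mul ((27 + 27 * t ^ 2 + (-18) * x * t + 3 * x ^ 2) : ℝ) (hasDerivAt_pow 4 y))).add (HasDerivAt.const_mul ((1) : ℝ) (hasDerivAt_pow 6 y)))
  exact hasDerivAt_of_eq hcomb (fun s => by simp only [PP, Pi.add_apply]; ring)
    (by simp only [PPy]; norm_num; try ring)

theorem hPPx_y (a x y t : ℝ) : HasDerivAt (fun s => PPx a x s t) (PPxy a x y t) y := by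
  have hcomb := ((((hasDerivAt_const y (((-450) * t + 2268 * t ^ 3 + (-1458) * t ^ 5 + 54 * x + (-1404) * x * t ^ 2 + 2430 * x * t ^ 4 + 180 * x ^ 2 * t + (-1620) * x ^ 2 * t ^ 3 + 12 * x ^ 3 + 540 * x ^ 3 * t ^ 2 + (-90) * x ^ 4 * t + 6 * x ^ 5 : ℝ))).add (HasDerivAt.const_mul (((-36) * a * t + 12 * a * x) : ℝ) (hasDerivAt_pow 1 y))).add (HasDerivAt.const_mul (((-180) * t + (-324) * t ^ 3 + (-36) * x + 324 * x * t ^ 2 + (-108) * x ^ 2 * t + 12 * x ^ 3) : ℝ) (hasDerivAt_pow 2 y))).add (HasDerivAt.const_mul (((-18) * t + 6 * x) : ℝ) (hasDerivAt_pow 4 y)))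
  exact hasDerivAt_of_eq hcomb (fun s => by simp only [PPx, Pi.add_apply]; ring)
    (by simp only [PPxy]; norm_num; try ring)

theorem hPPxx_y (a x y t : ℝ) : HasDerivAt (fun s => PPxx a x s t) (PPxxy a x y t) y := by
  have hcomb := ((((hasDerivAt_const y ((54 + (-1404) * t ^ 2 + 2430 * t ^ 4 + 360 * x * t + (-3240) * x * t ^ 3 + 36 * x ^ 2 + 1620 * x ^ 2 * t ^ 2 + (-360) * x ^ 3 * t + 30 * x ^ 4 : ℝ))).add (HasDerivAt.const_mul ((12 * a) : ℝ) (hasDerivAt_pow 1 y))).add (HasDerivAt.const_mul (((-36) + 324 * t ^ 2 + (-216) * x * t + 36 * x ^ 2) : ℝ) (hasDerivAt_pow 2 y))).add (HasDerivAt.const_mul ((6) : ℝ) (hasDerivAt_pow 4 y)))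
  exact hasDerivAt_of_eq hcomb (fun s => by simp only [PPxx, Pi.add_apply]; ring)
    (by simp only [PPxxy]; norm_num; try ring)

theorem hPPy_y (a x y t : ℝ) : HasDerivAt (fun s => PPy a x s t) (PPyy a x y t) y := by
  have hcomb := (((((hasDerivAt_const y (((-18) * a + 54 * a * t ^ 2 + (-36) * a * x * t + 6 * a * x ^ 2 : ℝ))).add (HasDerivAt.const_mul ((198 + 1404 * t ^ 2 + 486 * t ^ 4 + (-360) * x * t + (-648) * x * t ^ 3 + (-36) * x ^ 2 + 324 * x ^ 2 * t ^ 2 + (-72) * x ^ 3 * t + 6 * x ^ 4) : ℝ) (hasDerivAt_pow 1 y))).add (HasDerivAt.const_mul (((-6) * a) : ℝ) (hasDerivAt_pow 2 y))).add (HasDerivAt.const_mul ((108 + 108 * t ^ 2 + (-72) * x * t + 12 * x ^ 2) : ℝ) (hasDerivAt_pow 3 y))).add (HasDerivAt.const_mul ((6) : ℝ) (hasDerivAt_pow 5 y)))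
  exact hasDerivAt_of_eq hcomb (fun s => by simp only [PPy, Pi.add_apply]; ring)
    (by simp only [PPyy]; norm_num; try ring)

theorem hPPxy_y (a x y t : ℝ) : HasDerivAt (fun s => PPxy a x s t) (PPxyy a x y t) y := by
  have hcomb := (((hasDerivAt_const y (((-36) * a * t + 12 * a * x : ℝ))).add (HasDerivAt.const_mul (((-360) * t + (-648) * t ^ 3 + (-72) * x + 648 * x * t ^ 2 + (-216) * x ^ 2 * t + 24 * x ^ 3) : ℝ) (hasDerivAt_pow 1 y))).add (HasDerivAt.const_mul (((-72) * t + 24 * x) : ℝ) (hasDerivAt_pow 3 y)))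
  exact hasDerivAt_of_eq hcomb (fun s => by simp only [PPxy, Pi.add_apply]; ring)
    (by simp only [PPxyy]; norm_num; try ring)

theorem hPPxxy_y (a x y t : ℝ) : HasDerivAt (fun s => PPxxy a x s t) (PPxxyy a x y t) y := by
  have hcomb := (((hasDerivAt_const y ((12 * a : ℝ))).add (HasDerivAt.const_mul (((-72) + 648 * t ^ 2 + (-432) * x * t + 72 * x ^ 2) : ℝ) (hasDerivAt_pow 1 y))).add (HasDerivAt.const_mul ((24) : ℝ) (hasDerivAt_pow 3 y)))
  exact hasDerivAt_of_eq hcomb (fun s => by simp only [PPxxy, Pi.add_apply]; ring)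
    (by simp only [PPxxyy]; norm_num; try ring)

theorem hPP_t (a x y t : ℝ) : HasDerivAt (fun s => PP a x y s) (PPt a x y t) t := by
  have hcomb := (((((((hasDerivAt_const t ((9 + 99 * y ^ 2 + 27 * y ^ 4 + y ^ 6 + 27 * x ^ 2 + (-18) * x ^ 2 * y ^ 2 + 3 * x ^ 2 * y ^ 4 + 3 * x ^ 4 + 3 * x ^ 4 * y ^ 2 + x ^ 6 + (-18) * a * y + (-2) * a * y ^ 3 + 6 * a * x ^ 2 * y + a ^ 2 : ℝ))).add (HasDerivAt.const_mul (((-450) * x + (-180) * x * y ^ 2 + (-18) * x * y ^ 4 + 60 * x ^ 3 + (-36) * x ^ 3 * y ^ 2 + (-18) * x ^ 5 + (-36) * a * x * y) : ℝ) (hasDerivAt_pow 1 t))).add (HasDerivAt.const_mul ((3411 + 702 * y ^ 2 + 27 * y ^ 4 + (-702) * x ^ 2 + 162 * x ^ 2 * y ^ 2 + 135 * x ^ 4 + 54 * a * y) : ℝ) (hasDerivAt_pow 2 t))).add (HasDerivAt.const_mul ((2268 * x + (-324) * x * y ^ 2 + (-540) * x ^ 3) : ℝ) (hasDerivAt_pow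 3 t))).add (HasDerivAt.const_mul (((-2349) + 243 * y ^ 2 + 1215 * x ^ 2) : ℝ) (hasDerivAt_pow 4 t))).add (HasDerivAt.const_mul (((-1458) * x) : ℝ) (hasDerivAt_pow 5 t))).add (HasDerivAt.const_mul ((729) : ℝ) (hasDerivAt_pow 6 t)))
  exact hasDerivAt_of_eq hcomb (fun s => by simp only [PP, Pi.add_apply]; ring)
    (by simp only [PPt]; norm_num; try ring)

theorem hPPx_t (a x y t : ℝ) : HasDerivAt (fun s => PPx a x y s) (PPxt a x y t) t := by
  have hcomb := ((((((hasDerivAt_const t ((54 * x + (-36) * x * y ^ 2 + 6 * x * y ^ 4 + 12 * x ^ 3 + 12 * x ^ 3 * y ^ 2 + 6 * x ^ 5 + 12 * a * x * y : ℝ))).add (HasDerivAt.const_mul (((-450) + (-180) * y ^ 2 + (-18) * y ^ 4 + 180 * x ^ 2 + (-108) * x ^ 2 * y ^ 2 + (-90) * x ^ 4 + (-36) * a * y) : ℝ) (hasDerivAt_pow 1 t))).add (HasDerivAt.const_mul (((-1404) * x + 324 * x * y ^ 2 + 540 * x ^ 3) : ℝ) (hasDerivAt_pow 2 t))).add (HasDerivAt.const_mul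 ((2268 + (-324) * y ^ 2 + (-1620) * x ^ 2) : ℝ) (hasDerivAt_pow 3 t))).add (HasDerivAt.const_mul ((2430 * x) : ℝ) (hasDerivAt_pow 4 t))).add (HasDerivAt.const_mul (((-1458)) : ℝ) (hasDerivAt_pow 5 t)))
  exact hasDerivAt_of_eq hcomb (fun s => by simp only [PPx, Pi.add_apply]; ring)
    (by simp only [PPxt]; norm_num; try ring)

theorem hPPxx_t (a x y t : ℝ) : HasDerivAt (fun s => PPxx a x y s) (PPxxt a x y t) t := by
  have hcomb := (((((hasDerivAt_const t ((54 + (-36) * y ^ 2 + 6 * y ^ 4 + 36 * x ^ 2 + 36 * x ^ 2 * y ^ 2 + 30 * x ^ 4 + 12 * a * y : ℝ))).add (HasDerivAt.const_mul ((360 * x + (-216) * x * y ^ 2 + (-360) * x ^ 3) : ℝ) (hasDerivAt_pow 1 t))).add (HasDerivAt.const_mul (((-1404) + 324 * y ^ 2 + 1620 * x ^ 2) : ℝ) (hasDerivAt_pow 2 t))).add (HasDerivAt.const_mul (((-3240) * x) : ℝ) (hasDerivAt_pow 3 t))).add (HasDerivAt.const_mul ((2430) : ℝ) (hasDerivAt_pow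 4 t)))
  exact hasDerivAt_of_eq hcomb (fun s => by simp only [PPxx, Pi.add_apply]; ring)
    (by simp only [PPxxt]; norm_num; try ring)

theorem evx {a x y t : ℝ} (h : 0 < PP a x y t) : ∀ᶠ s in 𝓝 x, 0 < PP a s y t := by
  have hc : Continuous fun s : ℝ => PP a s y t := by unfold PP; fun_prop
  exact hc.continuousAt.eventually_const_lt h

theorem evy {a x y t : ℝ} (h : 0 < PP a x y t) : ∀ᶠ s in 𝓝 y, 0 < PP a x s t := by
  have hc : Continuous fun s : ℝ => PP a x s t := by unfold PP; fun_prop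
  exact hc.continuousAt.eventually_const_lt h

theorem evt {a x y t : ℝ} (h : 0 < PP a x y t) : ∀ᶠ s in 𝓝 t, 0 < PP a x y s := by
  have hc : Continuous fun s : ℝ => PP a x y s := by unfold PP; fun_prop
  exact hc.continuousAt.eventually_const_lt h

noncomputable def Lg (a : ℝ) : ℝ → ℝ → ℝ → ℝ := fun x y t => Real.log (PP a x y t)
noncomputable def Vv (a : ℝ) : ℝ → ℝ → ℝ → ℝ := fun x y t => 2 * dXi (dXi (Lg a)) x y t

theorem lem1 (a x y t : ℝ) (h : 0 < PP a x y t) :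
    dXi (Lg a) x y t = PPx a x y t / PP a x y t := by
  show deriv (fun s => Real.log (PP a s y t)) x = _
  exact (HasDerivAt.log (hPP_x a x y t) (ne_of_gt h)).deriv

theorem lem2 (a x y t : ℝ) (h : 0 < PP a x y t) :
    dXi (dXi (Lg a)) x y t
      = (PPxx a x y t * PP a x y t - PPx a x y t ^ 2) / PP a x y t ^ 2 := by
  have hne : PP a x y t ≠ 0 := ne_of_gt h
  show deriv (fun s => dXi (Lg a) s y t) x = _
  have hcomb := HasDerivAt.div (hPPx_x a x y t) (hPP_x a x y t) hne
  exact deriv_eq_of_eventually ((evx h).mono fun s hs => lem1 a s y t hs)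
    (hasDerivAt_of_eq hcomb (fun s => by simp only [Pi.add_apply, Pi.mul_apply, Pi.div_apply, Pi.pow_apply]) (by ring))

theorem lemV (a x y t : ℝ) (h : 0 < PP a x y t) :
    Vv a x y t = ((-2) * PPx a x y t ^ 2 + 2 * PP a x y t * PPxx a x y t) / PP a x y t ^ 2 := by
  show 2 * dXi (dXi (Lg a)) x y t = _
  rw [lem2 a x y t h]; ring

theorem lem3 (a x y t : ℝ) (h : 0 < PP a x y t) :
    dXi (Vv a) x y t = (4 * PPx a x y t ^ 3 + (-6) * PP a x y t * PPx a x y t * PPxx a x y t + 2 * PP a x y t ^ 2 * PPxxx a x y t) / PP a x y t ^ 3 := by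
  have hne : PP a x y t ≠ 0 := ne_of_gt h
  show deriv (fun s => Vv a s y t) x = _
  have hcomb := HasDerivAt.div ((HasDerivAt.const_mul ((-2) : ℝ) ((hPPx_x a x y t).pow 2)).add (HasDerivAt.const_mul (2 : ℝ) ((hPP_x a x y t).mul (hPPxx_x a x y t)))) ((hPP_x a x y t).pow 2) (pow_ne_zero 2 hne)
  exact deriv_eq_of_eventually ((evx h).mono fun s hs => lemV a s y t hs)
    (hasDerivAt_of_eq hcomb (fun s => by simp only [Pi.add_apply, Pi.mul_apply, Pi.div_apply, Pi.pow_apply]; ring) (by simp only [Pi.add_apply, Pi.mul_apply, Pi.div_apply, Pi.pow_apply]; field_simp; push_cast; ring))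

theorem lem4 (a x y t : ℝ) (h : 0 < PP a x y t) :
    dXi (dXi (Vv a)) x y t = ((-12) * PPx a x y t ^ 4 + 24 * PP a x y t * PPx a x y t ^ 2 * PPxx a x y t + (-6) * PP a x y t ^ 2 * PPxx a x y t ^ 2 + (-8) * PP a x y t ^ 2 * PPx a x y t * PPxxx a x y t + 2 * PP a x y t ^ 3 * PPx4 a x y t) / PP a x y t ^ 4 := by
  have hne : PP a x y t ≠ 0 := ne_of_gt h
  show deriv (fun s => dXi (Vv a) s y t) x = _
  have hcomb := HasDerivAt.div (((HasDerivAt.const_mul (4 : ℝ) ((hPPx_x a x y t).pow 3)).add (HasDerivAt.const_mul ((-6) : ℝ) (((hPP_x a x y t).mul (hPPx_x a x y t)).mul (hPPxx_x a x y t)))).add (HasDerivAt.const_mul (2 : ℝ) (((hPP_x a x y t).pow 2).mul (hPPxxx_x a x y t)))) ((hPP_x a x y t).pow 3) (pow_ne_zero 3 hne)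
  exact deriv_eq_of_eventually ((evx h).mono fun s hs => lem3 a s y t hs)
    (hasDerivAt_of_eq hcomb (fun s => by simp only [Pi.add_apply, Pi.mul_apply, Pi.div_apply, Pi.pow_apply]; ring) (by simp only [Pi.add_apply, Pi.mul_apply, Pi.div_apply, Pi.pow_apply]; field_simp; push_cast; ring))

theorem lem5 (a x y t : ℝ) (h : 0 < PP a x y t) :
    dXi (dXi (dXi (Vv a))) x y t = (48 * PPx a x y t ^ 5 + (-120) * PP a x y t * PPx a x y t ^ 3 * PPxx a x y t + 60 * PP a x y t ^ 2 * PPx a x y t * PPxx a x y t ^ 2 + 40 * PP a x y t ^ 2 * PPx a x y t ^ 2 * PPxxx a x y t + (-20) * PP a x y t ^ 3 * PPxx a x y t * PPxxx a x y t + (-10) * PP a x y t ^ 3 * PPx a x y t * PPx4 a x y t + 2 * PP a x y t ^ 4 * PPx5 a x y t) / PP a x y t ^ 5 := by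
  have hne : PP a x y t ≠ 0 := ne_of_gt h
  show deriv (fun s => dXi (dXi (Vv a)) s y t) x = _
  have hcomb := HasDerivAt.div (((((HasDerivAt.const_mul ((-12) : ℝ) ((hPPx_x a x y t).pow 4)).add (HasDerivAt.const_mul (24 : ℝ) (((hPP_x a x y t).mul ((hPPx_x a x y t).pow 2)).mul (hPPxx_x a x y t)))).add (HasDerivAt.const_mul ((-6) : ℝ) (((hPP_x a x y t).pow 2).mul ((hPPxx_x a x y t).pow 2)))).add (HasDerivAt.const_mul ((-8) : ℝ) ((((hPP_x a x y t).pow 2).mul (hPPx_x a x y t)).mul (hPPxxx_x a x y t)))).add (HasDerivAt.const_mul (2 : ℝ) (((hPP_x a x y t).pow 3).mul (hPPx4_x a x y t)))) ((hPP_x a x y t).pow 4) (pow_ne_zero 4 hne)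
  exact deriv_eq_of_eventually ((evx h).mono fun s hs => lem4 a s y t hs)
    (hasDerivAt_of_eq hcomb (fun s => by simp only [Pi.add_apply, Pi.mul_apply, Pi.div_apply, Pi.pow_apply]; ring) (by simp only [Pi.add_apply, Pi.mul_apply, Pi.div_apply, Pi.pow_apply]; field_simp; push_cast; ring))

theorem lemT (a x y t : ℝ) (h : 0 < PP a x y t) :
    dTau (Vv a) x y t = (4 * PPx a x y t ^ 2 * PPt a x y t + (-2) * PP a x y t * PPxx a x y t * PPt a x y t + (-4) * PP a x y t * PPx a x y t * PPxt a x y t + 2 * PP a x y t ^ 2 * PPxxt a x y t) / PP a x y t ^ 3 := by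
  have hne : PP a x y t ≠ 0 := ne_of_gt h
  show deriv (fun s => Vv a x y s) t = _
  have hcomb := HasDerivAt.div ((HasDerivAt.const_mul ((-2) : ℝ) ((hPPx_t a x y t).pow 2)).add (HasDerivAt.const_mul (2 : ℝ) ((hPP_t a x y t).mul (hPPxx_t a x y t)))) ((hPP_t a x y t).pow 2) (pow_ne_zero 2 hne)
  exact deriv_eq_of_eventually ((evt h).mono fun s hs => lemV a x y s hs)
    (hasDerivAt_of_eq hcomb (fun s => by simp only [Pi.add_apply, Pi.mul_apply, Pi.div_apply, Pi.pow_apply]; ring) (by simp only [Pi.add_apply, Pi.mul_apply, Pi.div_apply, Pi.pow_apply]; field_simp; push_cast; ring))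

theorem lemY (a x y t : ℝ) (h : 0 < PP a x y t) :
    dEta (Vv a) x y t = (4 * PPx a x y t ^ 2 * PPy a x y t + (-2) * PP a x y t * PPxx a x y t * PPy a x y t + (-4) * PP a x y t * PPx a x y t * PPxy a x y t + 2 * PP a x y t ^ 2 * PPxxy a x y t) / PP a x y t ^ 3 := by
  have hne : PP a x y t ≠ 0 := ne_of_gt h
  show deriv (fun s => Vv a x s t) y = _
  have hcomb := HasDerivAt.div ((HasDerivAt.const_mul ((-2) : ℝ) ((hPPx_y a x y t).pow 2)).add (HasDerivAt.const_mul (2 : ℝ) ((hPP_y a x y t).mul (hPPxx_y a x y t)))) ((hPP_y a x y t).pow 2) (pow_ne_zero 2 hne)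
  exact deriv_eq_of_eventually ((evy h).mono fun s hs => lemV a x s t hs)
    (hasDerivAt_of_eq hcomb (fun s => by simp only [Pi.add_apply, Pi.mul_apply, Pi.div_apply, Pi.pow_apply]; ring) (by simp only [Pi.add_apply, Pi.mul_apply, Pi.div_apply, Pi.pow_apply]; field_simp; push_cast; ring))

theorem lemYY (a x y t : ℝ) (h : 0 < PP a x y t) :
    dEta (dEta (Vv a)) x y t = ((-12) * PPx a x y t ^ 2 * PPy a x y t ^ 2 + 4 * PP a x y t * PPxx a x y t * PPy a x y t ^ 2 + 16 * PP a x y t * PPx a x y t * PPy a x y t * PPxy a x y t + 4 * PP a x y t * PPx a x y t ^ 2 * PPyy a x y t + (-4) * PP a x y t ^ 2 * PPxy a x y t ^ 2 + (-4) * PP a x y t ^ 2 * PPy a x y t * PPxxy a x y t + (-2) * PP a x y t ^ 2 * PPxx a x y t * PPyy a x y t + (-4) * PP a x y t ^ 2 * PPx a x y t * PPxyy a x y t + 2 * PP a x y t ^ 3 * PPxxyy a x y t) / PP a x y t ^ 4 := by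
  have hne : PP a x y t ≠ 0 := ne_of_gt h
  show deriv (fun s => dEta (Vv a) x s t) y = _
  have hcomb := HasDerivAt.div ((((HasDerivAt.const_mul (4 : ℝ) (((hPPx_y a x y t).pow 2).mul (hPPy_y a x y t))).add (HasDerivAt.const_mul ((-2) : ℝ) (((hPP_y a x y t).mul (hPPxx_y a x y t)).mul (hPPy_y a x y t)))).add (HasDerivAt.const_mul ((-4) : ℝ) (((hPP_y a x y t).mul (hPPx_y a x y t)).mul (hPPxy_y a x y t)))).add (HasDerivAt.const_mul (2 : ℝ) (((hPP_y a x y t).pow 2).mul (hPPxxy_y a x y t)))) ((hPP_y a x y t).pow 3) (pow_ne_zero 3 hne)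
  exact deriv_eq_of_eventually ((evy h).mono fun s hs => lemY a x s t hs)
    (hasDerivAt_of_eq hcomb (fun s => by simp only [Pi.add_apply, Pi.mul_apply, Pi.div_apply, Pi.pow_apply]; ring) (by simp only [Pi.add_apply, Pi.mul_apply, Pi.div_apply, Pi.pow_apply]; field_simp; push_cast; ring))

theorem main (a x y t : ℝ) (h : 0 < PP a x y t) :
    KPIAt (fun x' y' t' => 2 * dXi (dXi (Lg a)) x' y' t') x y t := by
  have hne : PP a x y t ≠ 0 := ne_of_gt h
  have hB : 3 * PPy a x y t ^ 2 + 3 * PPxx a x y t ^ 2 + (-1) * PPx a x y t * PPt a x y t + (-4) * PPx a x y t * PPxxx a x y t + (-3) * PP a x y t * PPyy a x y t + PP a x y t * PPxt a x y t + PP a x y t * PPx4 a x y t = 0 := by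
    simp only [PP, PPx, PPxx, PPxxx, PPx4, PPx5, PPx6, PPt, PPxt, PPxxt, PPxxxt, PPy, PPxy, PPxxy, PPyy, PPxyy, PPxxyy]; ring
  have hBx : 6 * PPy a x y t * PPxy a x y t + (-1) * PPxx a x y t * PPt a x y t + 2 * PPxx a x y t * PPxxx a x y t + (-3) * PPx a x y t * PPyy a x y t + (-3) * PPx a x y t * PPx4 a x y t + (-3) * PP a x y t * PPxyy a x y t + PP a x y t * PPxxt a x y t + PP a x y t * PPx5 a x y t = 0 := by
    simp only [PP, PPx, PPxx, PPxxx, PPx4, PPx5, PPx6, PPt, PPxt, PPxxt, PPxxxt, PPy, PPxy, PPxxy, PPyy, PPxyy, PPxxyy]; ring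
  have hBxx : 6 * PPxy a x y t ^ 2 + 6 * PPy a x y t * PPxxy a x y t + (-1) * PPxxx a x y t * PPt a x y t + 2 * PPxxx a x y t ^ 2 + (-3) * PPxx a x y t * PPyy a x y t + (-1) * PPxx a x y t * PPxt a x y t + (-1) * PPxx a x y t * PPx4 a x y t + (-6) * PPx a x y t * PPxyy a x y t + PPx a x y t * PPxxt a x y t + (-2) * PPx a x y t * PPx5 a x y t + (-3) * PP a x y t * PPxxyy a x y t + PP a x y t * PPxxxt a x y t + PP a x y t * PPx6 a x y t = 0 := by
    simp only [PP, PPx, PPxx, PPxxx, PPx4, PPx5, PPx6, PPt, PPxt, PPxxt, PPxxxt, PPy, PPxy, PPxxy, PPyy, PPxyy, PPxxyy]; ring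
  show dXi (fun x' y' t' => dTau (Vv a) x' y' t' + 6 * Vv a x' y' t' * dXi (Vv a) x' y' t'
      + dXi (dXi (dXi (Vv a))) x' y' t') x y t = 3 * dEta (dEta (Vv a)) x y t
  rw [lemYY a x y t h]
  show deriv (fun s => dTau (Vv a) s y t + 6 * Vv a s y t * dXi (Vv a) s y t
      + dXi (dXi (dXi (Vv a))) s y t) x = _
  have hcomb := ((HasDerivAt.div ((((HasDerivAt.const_mul (4 : ℝ) (((hPPx_x a x y t).pow 2).mul (hPPt_x a x y t))).add (HasDerivAt.const_mul ((-2) : ℝ) (((hPP_x a x y t).mul (hPPxx_x a x y t)).mul (hPPt_x a x y t)))).add (HasDerivAt.const_mul ((-4) : ℝ) (((hPP_x a x y t).mul (hPPx_x a x y t)).mul (hPPxt_x a x y t)))).add (HasDerivAt.const_mul (2 : ℝ) (((hPP_x a x y t).pow 2).mul (hPPxxt_x a x y t)))) ((hPP_x a x y t).pow 3) (pow_ne_zero 3 hne)).add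
      ((HasDerivAt.const_mul (6 : ℝ) (HasDerivAt.div ((HasDerivAt.const_mul ((-2) : ℝ) ((hPPx_x a x y t).pow 2)).add (HasDerivAt.const_mul (2 : ℝ) ((hPP_x a x y t).mul (hPPxx_x a x y t)))) ((hPP_x a x y t).pow 2) (pow_ne_zero 2 hne))).mul
       (HasDerivAt.div (((HasDerivAt.const_mul (4 : ℝ) ((hPPx_x a x y t).pow 3)).add (HasDerivAt.const_mul ((-6) : ℝ) (((hPP_x a x y t).mul (hPPx_x a x y t)).mul (hPPxx_x a x y t)))).add (HasDerivAt.const_mul (2 : ℝ) (((hPP_x a x y t).pow 2).mul (hPPxxx_x a x y t)))) ((hPP_x a x y t).pow 3) (pow_ne_zero 3 hne)))).add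
     (HasDerivAt.div (((((((HasDerivAt.const_mul (48 : ℝ) ((hPPx_x a x y t).pow 5)).add (HasDerivAt.const_mul ((-120) : ℝ) (((hPP_x a x y t).mul ((hPPx_x a x y t).pow 3)).mul (hPPxx_x a x y t)))).add (HasDerivAt.const_mul (60 : ℝ) ((((hPP_x a x y t).pow 2).mul (hPPx_x a x y t)).mul ((hPPxx_x a x y t).pow 2)))).add (HasDerivAt.const_mul (40 : ℝ) ((((hPP_x a x y t).pow 2).mul ((hPPx_x a x y t).pow 2)).mul (hPPxxx_x a x y t)))).add (HasDerivAt.const_mul ((-20) : ℝ) ((((hPP_x a x y t).pow 3).mul (hPPxx_x a x y t)).mul (hPPxxx_x a x y t)))).add (HasDerivAt.const_mul ((-10) : ℝ) ((((hPP_x a x y t).pow 3).mul (hPPx_x a x y t)).mul (hPPx4_x a x y t)))).add (HasDerivAt.const_mul (2 : ℝ) (((hPP_x a x y t).pow 4).mul (hPPx5_x a x y t)))) ((hPP_x a x y t).pow 5) (pow_ne_zero 5 hne))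
  have hgood : HasDerivAt (fun s => (4 * PPx a s y t ^ 2 * PPt a s y t + (-2) * PP a s y t * PPxx a s y t * PPt a s y t + (-4) * PP a s y t * PPx a s y t * PPxt a s y t + 2 * PP a s y t ^ 2 * PPxxt a s y t) / PP a s y t ^ 3 + 6 * (((-2) * PPx a s y t ^ 2 + 2 * PP a s y t * PPxx a s y t) / PP a s y t ^ 2) * ((4 * PPx a s y t ^ 3 + (-6) * PP a s y t * PPx a s y t * PPxx a s y t + 2 * PP a s y t ^ 2 * PPxxx a s y t) / PP a s y t ^ 3) + (48 * PPx a s y t ^ 5 + (-120) * PP a s y t * PPx a s y t ^ 3 * PPxx a s y t + 60 * PP a s y t ^ 2 * PPx a s y t * PPxx a s y t ^ 2 + 40 * PP a s y t ^ 2 * PPx a s y t ^ 2 * PPxxx a s y t + (-20) * PP a s y t ^ 3 * PPxx a s y t * PPxxx a s y t + (-10) * PP a s y t ^ 3 * PPx a s y t * PPx4 a s y t + 2 * PP a s y t ^ 4 * PPx5 a s y t) / PP a s y t ^ 5) ((36 * PP a x y t ^ 2 * PPx a x y t ^ 2 * PPxx a x y t ^ 2 + (-12) * PP a x y t ^ 2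 * PPx a x y t ^ 3 * PPt a x y t + (-48) * PP a x y t ^ 2 * PPx a x y t ^ 3 * PPxxx a x y t + (-12) * PP a x y t ^ 3 * PPxx a x y t ^ 3 + 12 * PP a x y t ^ 3 * PPx a x y t * PPxx a x y t * PPt a x y t + 12 * PP a x y t ^ 3 * PPx a x y t ^ 2 * PPxt a x y t + 36 * PP a x y t ^ 3 * PPx a x y t ^ 2 * PPx4 a x y t + (-2) * PP a x y t ^ 4 * PPxxx a x y t * PPt a x y t + 4 * PP a x y t ^ 4 * PPxxx a x y t ^ 2 + (-6) * PP a x y t ^ 4 * PPxx a x y t * PPxt a x y t + (-6) * PP a x y t ^ 4 * PPxx a x y t * PPx4 a x y t + (-6) * PP a x y t ^ 4 * PPx a x y t * PPxxt a x y t + (-12) * PP a x y t ^ 4 * PPx a x y t * PPx5 a x y t + 2 * PP a x y t ^ 5 * PPxxxt a x y t + 2 * PP a x y t ^ 5 * PPx6 a x y t) / PP a x y t ^ 6) x :=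
    hasDerivAt_of_eq hcomb (fun s => by simp only [Pi.add_apply, Pi.mul_apply, Pi.div_apply, Pi.pow_apply]; ring) (by simp only [Pi.add_apply, Pi.mul_apply, Pi.div_apply, Pi.pow_apply]; field_simp; push_cast; ring)
  have hder := deriv_eq_of_eventually ((evx h).mono fun s hs => by
    show dTau (Vv a) s y t + 6 * Vv a s y t * dXi (Vv a) s y t + dXi (dXi (dXi (Vv a))) s y t = _
    rw [lemT a s y t hs, lemV a s y t hs, lem3 a s y t hs, lem5 a s y t hs]) hgood
  rw [hder]
  have hnum : (36 * PP a x y t ^ 2 * PPx a x y t ^ 2 * PPxx a x y t ^ 2 + (-12) * PP a x y t ^ 2 * PPx a x y t ^ 3 * PPt a x y t + (-48) * PP a x y t ^ 2 * PPx a x y t ^ 3 * PPxxx a x y t + (-12) * PP a x y t ^ 3 * PPxx a x y t ^ 3 + 12 * PP a x y t ^ 3 * PPx a x y t * PPxx a x y t * PPt a x y t + 12 * PP a x y t ^ 3 * PPx a x y t ^ 2 * PPxt a x y t + 36 * PP a x y t ^ 3 * PPx a x y t ^ 2 * PPx4 a x y t + (-2) * PP a x y t ^ 4 * PPxxx a x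 y t * PPt a x y t + 4 * PP a x y t ^ 4 * PPxxx a x y t ^ 2 + (-6) * PP a x y t ^ 4 * PPxx a x y t * PPxt a x y t + (-6) * PP a x y t ^ 4 * PPxx a x y t * PPx4 a x y t + (-6) * PP a x y t ^ 4 * PPx a x y t * PPxxt a x y t + (-12) * PP a x y t ^ 4 * PPx a x y t * PPx5 a x y t + 2 * PP a x y t ^ 5 * PPxxxt a x y t + 2 * PP a x y t ^ 5 * PPx6 a x y t) = 3 * ((-12) * PPx a x y t ^ 2 * PPy a x y t ^ 2 + 4 * PP a x y t * PPxx a x y t * PPy a x y t ^ 2 + 16 * PP a x y t * PPx a x y t * PPy a x y t * PPxy a x y t + 4 * PP a x y t * PPx a x y t ^ 2 * PPyy a x y t + (-4) * PP a x y t ^ 2 * PPxy a x y t ^ 2 + (-4) * PP a x y t ^ 2 * PPy a x y t * PPxxy a x y t + (-2) * PP a x y t ^ 2 * PPxx a x y t * PPyy a x y t + (-4) * PP a x y t ^ 2 * PPx a x y t * PPxyy a x y t + 2 * PP a x y t ^ 3 * PPxxyy a x y t) * PP a x y t ^ 2 := by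
    linear_combination (12 * PP a x y t ^ 2 * PPx a x y t ^ 2 + (-4) * PP a x y t ^ 3 * PPxx a x y t) * hB + ((-8) * PP a x y t ^ 3 * PPx a x y t) * hBx + (2 * PP a x y t ^ 4) * hBxx
  rw [hnum]
  field_simp

theorem P_eq (a x y t : ℝ) : D2hat (x - 3 * t) y a (-48 * t) = PP a x y t := by
  simp only [D2hat, D2, PP]; ring

end DMKP

theorem kpi_from_nls_rational (α : ℝ) :
    ∀ ξ η τ : ℝ, 0 < D2hat (ξ - 3 * τ) η α (-48 * τ) →
      KPIAt (fun ξ' η' τ' =>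
        2 * dXi (dXi (fun ξ'' η'' τ'' =>
          Real.log (D2hat (ξ'' - 3 * τ'') η'' α (-48 * τ'')))) ξ' η' τ') ξ η τ := by
  intro ξ η τ hpos
  have hfun : (fun ξ'' η'' τ'' => Real.log (D2hat (ξ'' - 3 * τ'') η'' α (-48 * τ'')))
      = DMKP.Lg α := by
    funext x y t
    simp only [DMKP.Lg, DMKP.P_eq]
  rw [hfun]
  rw [DMKP.P_eq] at hpos
  exact DMKP.main α ξ η τ hpos
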